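/- Let α > 0 and let Ψ : ℝ × ℝ → ℝ be analytic in a neighborhood of (0,0), with convergent power series Ψ(r,R) = Σ_{i,j≥0} Ψ_{ij} r^i R^j. Assume: (i) Ψ is odd, i.e. Ψ_{ij} = 0 whenever i + j is even; (ii) Ψ_{ij} = 0 whenever i + j < 3; (iii) the limit L := lim_{r→0⁺} ∂_rΨ(r,r)/r² exists and lies in (0,∞); (iv) ∂_RΨ(r,r) = −(α/(α+1)) ∂_rΨ(r,r) for all sufficiently small r > 0; (v) for every τ ∈ (0,1], one has lim_{r→0⁺} [∂_rΨ(r,rτ)/∂_rΨ(r,r)] · [∂_RΨ(r,r)τ²/∂_RΨ(r,rτ)]^{α/(α+1)} = 1, where for all sufficiently small r > 0 the quantity ∂_RΨ(r,r)τ²/∂_RΨ(r,rτ) is positive. Then Ψ₂₁ = Ψ₁₂ = 0, Ψ₃₀ > 0, and Ψ₀₃ = −(α/(α+1))Ψ₃₀; equivalently, setting h := 2Ψ₃₀ > 0, the Taylor expansion of Ψ has the structure Ψ(r,R) = (h/2)(r³ − (α/(α+1))R³) + (terms of total degree ≥ 5). -/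

import Mathlib

open Set

open Filter Metric


lemma summable_aux {x : ℝ} (h0 : 0 ≤ x) (h1 : x < 1) :
    Summable (fun ij : ℕ × ℕ => (ij.1 : ℝ) * x ^ (ij.1 + ij.2)) := by
  have h1' : ‖x‖ < 1 := by rwa [Real.norm_eq_abs, abs_of_nonneg h0]
  have hf : Summable (fun i : ℕ => ‖(i : ℝ) * x ^ i‖) := by
    apply summable_norm_iff.mpr
    simpa using summable_pow_mul_geometric_of_norm_lt_one 1 h1'
  have hg : Summable (fun j : ℕ => ‖x ^ j‖) := by
    apply summable_norm_iff.mpr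
    exact summable_geometric_of_lt_one h0 h1
  have := summable_mul_of_summable_norm hf hg
  refine this.congr fun ij => ?_
  rw [pow_add]; ring

lemma summable_geom_aux {x : ℝ} (h0 : 0 ≤ x) (h1 : x < 1) :
    Summable (fun ij : ℕ × ℕ => x ^ (ij.1 + ij.2)) := by
  have hg : Summable (fun j : ℕ => ‖x ^ j‖) := by
    apply summable_norm_iff.mpr
    exact summable_geometric_of_lt_one h0 h1
  have := summable_mul_of_summable_norm hg hg
  refine this.congr fun ij => ?_
  rw [pow_add]

lemma aux_bound {i j : ℕ} {cij y R δ B : ℝ} (hδ : 0 < δ) (hy : |y| ≤ δ) (hR : |R| ≤ δ)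
    (hB : |cij| * δ ^ (i + j) ≤ B) :
    |(i : ℝ) * cij * y ^ (i - 1) * R ^ j| ≤ (i : ℝ) * B / δ := by
  have hB0 : 0 ≤ B := le_trans (by positivity) hB
  cases i with
  | zero => simp [hδ.le, hB0, div_nonneg]
  | succ k =>
    have hyk : |y| ^ k ≤ δ ^ k := pow_le_pow_left₀ (abs_nonneg _) hy k
    have hRj : |R| ^ j ≤ δ ^ j := pow_le_pow_left₀ (abs_nonneg _) hR j
    have habs : |((k + 1 : ℕ) : ℝ) * cij * y ^ (k + 1 - 1) * R ^ j|
        = ((k + 1 : ℕ) : ℝ) * (|cij| * (|y| ^ k * |R| ^ j)) := by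
      rw [abs_mul, abs_mul, abs_mul, abs_pow, abs_pow]
      push_cast
      rw [abs_of_nonneg (by positivity : (0:ℝ) ≤ (k : ℝ) + 1)]
      ring_nf
    rw [habs]
    have h1 : |cij| * (|y| ^ k * |R| ^ j) ≤ |cij| * (δ ^ k * δ ^ j) := by
      apply mul_le_mul_of_nonneg_left _ (abs_nonneg _)
      exact mul_le_mul hyk hRj (by positivity) (by positivity)
    have h2 : |cij| * (δ ^ k * δ ^ j) = |cij| * δ ^ (k + 1 + j) / δ := by
      rw [show k + 1 + j = (k + j) + 1 by ring, pow_succ, pow_add]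
      field_simp
    have h3 : |cij| * (δ ^ k * δ ^ j) ≤ B / δ := by
      rw [h2]; exact (div_le_div_iff_of_pos_right hδ).mpr hB
    calc ((k + 1 : ℕ) : ℝ) * (|cij| * (|y| ^ k * |R| ^ j))
        ≤ ((k + 1 : ℕ) : ℝ) * (B / δ) := by
          apply mul_le_mul_of_nonneg_left (h1.trans h3) (by positivity)
      _ = ((k + 1 : ℕ) : ℝ) * B / δ := by ring


lemma aux_tail {i j : ℕ} (h5 : 4 < i + j) {cij y R δ m B : ℝ} (hδ : 0 < δ)
    (hm : 0 ≤ m) (hmδ : m ≤ δ) (hy : |y| ≤ m) (hR : |R| ≤ m)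
    (hB : |cij| * δ ^ (i + j) ≤ B) :
    |(i : ℝ) * cij * y ^ (i - 1) * R ^ j| ≤ m ^ 4 * ((i : ℝ) * B / δ ^ 5) := by
  have hB0 : 0 ≤ B := le_trans (by positivity) hB
  cases i with
  | zero => simp
  | succ k =>
    have hn : 4 ≤ k + j := by omega
    obtain ⟨p, hp⟩ := Nat.exists_eq_add_of_le hn
    have habs : |((k + 1 : ℕ) : ℝ) * cij * y ^ (k + 1 - 1) * R ^ j|
        = ((k + 1 : ℕ) : ℝ) * (|cij| * (|y| ^ k * |R| ^ j)) := by
      rw [abs_mul, abs_mul, abs_mul, abs_pow, abs_pow]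
      push_cast
      rw [abs_of_nonneg (by positivity : (0:ℝ) ≤ (k : ℝ) + 1)]
      ring_nf
    rw [habs]
    have h1 : |y| ^ k * |R| ^ j ≤ m ^ (k + j) := by
      rw [pow_add]
      exact mul_le_mul (pow_le_pow_left₀ (abs_nonneg _) hy k)
        (pow_le_pow_left₀ (abs_nonneg _) hR j) (by positivity) (by positivity)
    have h2 : m ^ (k + j) ≤ m ^ 4 * δ ^ p := by
      rw [hp, pow_add]
      exact mul_le_mul_of_nonneg_left (pow_le_pow_left₀ hm hmδ p) (by positivity)
    have h3 : |cij| * (m ^ 4 * δ ^ p) ≤ m ^ 4 * (B / δ ^ 5) := by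
      have hδn : |cij| * δ ^ (k + 1 + j) ≤ B := hB
      have hpow : δ ^ (k + 1 + j) = δ ^ p * δ ^ 5 := by
        rw [← pow_add]; congr 1; omega
      have : |cij| * δ ^ p ≤ B / δ ^ 5 := by
        rw [le_div_iff₀ (by positivity)]
        calc |cij| * δ ^ p * δ ^ 5 = |cij| * (δ ^ p * δ ^ 5) := by ring
          _ = |cij| * δ ^ (k + 1 + j) := by rw [hpow]
          _ ≤ B := hδn
      calc |cij| * (m ^ 4 * δ ^ p) = m ^ 4 * (|cij| * δ ^ p) := by ring
        _ ≤ m ^ 4 * (B / δ ^ 5) := by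
            exact mul_le_mul_of_nonneg_left this (by positivity)
    calc ((k + 1 : ℕ) : ℝ) * (|cij| * (|y| ^ k * |R| ^ j))
        ≤ ((k + 1 : ℕ) : ℝ) * (|cij| * (m ^ 4 * δ ^ p)) := by
          apply mul_le_mul_of_nonneg_left _ (by positivity)
          exact mul_le_mul_of_nonneg_left (h1.trans h2) (abs_nonneg _)
      _ ≤ ((k + 1 : ℕ) : ℝ) * (m ^ 4 * (B / δ ^ 5)) := by
          apply mul_le_mul_of_nonneg_left h3 (by positivity)
      _ = m ^ 4 * (((k + 1 : ℕ) : ℝ) * B / δ ^ 5) := by push_cast; ring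

lemma key (c : ℕ → ℕ → ℝ) (Ψ : ℝ → ℝ → ℝ) (ε : ℝ) (hε : 0 < ε)
    (hS : ∀ r R : ℝ, |r| < ε → |R| < ε →
      HasSum (fun ij : ℕ × ℕ => c ij.1 ij.2 * r ^ ij.1 * R ^ ij.2) (Ψ r R))
    (hodd : ∀ i j : ℕ, Even (i + j) → c i j = 0)
    (hlow : ∀ i j : ℕ, i + j < 3 → c i j = 0) :
    ∃ δ > 0, ∃ K : ℝ, ∀ r R : ℝ, |r| < δ → |R| < δ →
      |deriv (fun s => Ψ s R) r - (3*c 3 0*r^2 + 2*c 2 1*(r*R) + c 1 2*R^2)|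
        ≤ K * (max |r| |R|)^4 := by
  set ρ : ℝ := ε / 2 with hρdef
  have hρ : 0 < ρ := by positivity
  set δ : ℝ := ε / 4 with hδdef
  have hδ : 0 < δ := by positivity
  have hδρ : δ = ρ / 2 := by rw [hρdef, hδdef]; ring
  -- coefficient bound
  have hsum0 : Summable (fun ij : ℕ × ℕ => |c ij.1 ij.2| * ρ ^ (ij.1 + ij.2)) := by
    have h0 := (hS ρ ρ (by rw [abs_of_pos hρ]; linarith) (by rw [abs_of_pos hρ]; linarith)).summable
    have := h0.abs
    refine this.congr fun ij => ?_
    rw [abs_mul, abs_mul, abs_pow, abs_pow, abs_of_pos hρ, pow_add]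
    ring
  set C : ℝ := ∑' ij : ℕ × ℕ, |c ij.1 ij.2| * ρ ^ (ij.1 + ij.2) with hCdef
  have hC0 : 0 ≤ C := tsum_nonneg fun ij => by positivity
  have hCb : ∀ i j : ℕ, |c i j| * δ ^ (i + j) ≤ C * (2⁻¹ : ℝ) ^ (i + j) := by
    intro i j
    have h1 : |c i j| * ρ ^ (i + j) ≤ C :=
      Summable.le_tsum hsum0 (i, j) fun b _ => by positivity
    have : |c i j| * δ ^ (i + j) = |c i j| * ρ ^ (i + j) * (2⁻¹ : ℝ) ^ (i + j) := by
      rw [hδρ, div_eq_mul_inv, mul_pow]; ring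
    rw [this]
    exact mul_le_mul_of_nonneg_right h1 (by positivity)
  -- summable bounds
  have hhalf0 : (0:ℝ) ≤ 2⁻¹ := by norm_num
  have hhalf1 : (2⁻¹:ℝ) < 1 := by norm_num
  have husum : Summable (fun ij : ℕ × ℕ => (ij.1 : ℝ) * (C * (2⁻¹:ℝ) ^ (ij.1 + ij.2)) / δ) := by
    have := (summable_aux hhalf0 hhalf1).mul_left (C / δ)
    refine this.congr fun ij => ?_
    field_simp
  have hwsum : Summable (fun ij : ℕ × ℕ => (ij.1 : ℝ) * (C * (2⁻¹:ℝ) ^ (ij.1 + ij.2)) / δ ^ 5) := by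
    have := (summable_aux hhalf0 hhalf1).mul_left (C / δ ^ 5)
    refine this.congr fun ij => ?_
    field_simp
  set K : ℝ := ∑' ij : ℕ × ℕ, (ij.1 : ℝ) * (C * (2⁻¹:ℝ) ^ (ij.1 + ij.2)) / δ ^ 5 with hKdef
  refine ⟨δ, hδ, K, fun r R hr hR => ?_⟩
  -- the derivative of the sum
  set g : ℕ × ℕ → ℝ → ℝ := fun ij z => c ij.1 ij.2 * z ^ ij.1 * R ^ ij.2 with hgdef
  set g' : ℕ × ℕ → ℝ → ℝ := fun ij y => (ij.1 : ℝ) * c ij.1 ij.2 * y ^ (ij.1 - 1) * R ^ ij.2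
    with hg'def
  have hgderiv : ∀ ij : ℕ × ℕ, ∀ y : ℝ, y ∈ ball (0:ℝ) δ → HasDerivAt (g ij) (g' ij y) y := by
    intro ij y _
    have h1 := (hasDerivAt_pow ij.1 y).const_mul (c ij.1 ij.2)
    have h2 : HasDerivAt (fun x => c ij.1 ij.2 * x ^ ij.1 * R ^ ij.2)
        (c ij.1 ij.2 * ((ij.1 : ℝ) * y ^ (ij.1 - 1)) * R ^ ij.2) y := h1.mul_const (R ^ ij.2)
    convert h2 using 1
    simp only [hg'def]; ring
  have hmemball : ∀ y : ℝ, y ∈ ball (0:ℝ) δ → |y| ≤ δ := by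
    intro y hy
    rw [mem_ball, dist_zero_right, Real.norm_eq_abs] at hy
    exact hy.le
  have hRδ : |R| ≤ δ := hR.le
  have hgbound : ∀ ij : ℕ × ℕ, ∀ y : ℝ, y ∈ ball (0:ℝ) δ →
      ‖g' ij y‖ ≤ (ij.1 : ℝ) * (C * (2⁻¹:ℝ) ^ (ij.1 + ij.2)) / δ := by
    intro ij y hy
    rw [Real.norm_eq_abs]
    exact aux_bound hδ (hmemball y hy) hRδ (hCb ij.1 ij.2)
  have hg0 : Summable (fun ij : ℕ × ℕ => g ij 0) := by
    apply Summable.of_norm_bounded ((summable_geom_aux hhalf0 hhalf1).mul_left C)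
    intro ij
    rw [Real.norm_eq_abs, hgdef]
    simp only
    rw [abs_mul, abs_mul, abs_pow, abs_pow]
    calc |c ij.1 ij.2| * |(0:ℝ)| ^ ij.1 * |R| ^ ij.2
        ≤ |c ij.1 ij.2| * δ ^ ij.1 * δ ^ ij.2 := by
          apply mul_le_mul _ (pow_le_pow_left₀ (abs_nonneg _) hRδ _) (by positivity)
            (by positivity)
          apply mul_le_mul_of_nonneg_left _ (abs_nonneg _)
          apply pow_le_pow_left₀ (abs_nonneg _)
          rw [abs_zero]; exact hδ.le
      _ = |c ij.1 ij.2| * δ ^ (ij.1 + ij.2) := by rw [pow_add]; ring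
      _ ≤ C * (2⁻¹:ℝ) ^ (ij.1 + ij.2) := hCb ij.1 ij.2
  have hrball : r ∈ ball (0:ℝ) δ := by
    rw [mem_ball, dist_zero_right, Real.norm_eq_abs]; exact hr
  have hDeriv : HasDerivAt (fun z => ∑' ij : ℕ × ℕ, g ij z) (∑' ij : ℕ × ℕ, g' ij r) r :=
    hasDerivAt_tsum_of_isPreconnected husum isOpen_ball (convex_ball 0 δ).isPreconnected
      hgderiv hgbound (mem_ball_self hδ) hg0 hrball
  -- identify Ψ with the sum near r
  have hΨeq : ∀ z : ℝ, z ∈ ball (0:ℝ) δ → Ψ z R = ∑' ij : ℕ × ℕ, g ij z := by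
    intro z hz
    have hzε : |z| < ε := lt_of_le_of_lt (hmemball z hz) (by rw [hδdef]; linarith)
    have hRε : |R| < ε := lt_of_lt_of_le hR (by rw [hδdef]; linarith)
    exact ((hS z R hzε hRε).tsum_eq).symm
  have hderiv_eq : deriv (fun s => Ψ s R) r = ∑' ij : ℕ × ℕ, g' ij r := by
    have hev : (fun s => Ψ s R) =ᶠ[nhds r] (fun z => ∑' ij : ℕ × ℕ, g ij z) := by
      filter_upwards [isOpen_ball.mem_nhds hrball] with z hz using hΨeq z hz
    rw [hev.deriv_eq]
    exact hDeriv.deriv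
  rw [hderiv_eq]
  -- split into low-order part and tail
  set m : ℝ := max |r| |R| with hmdef
  have hm0 : 0 ≤ m := le_trans (abs_nonneg r) (le_max_left _ _)
  have hmδ : m ≤ δ := by
    apply max_le hr.le hR.le
  have hrm : |r| ≤ m := le_max_left _ _
  have hRm : |R| ≤ m := le_max_right _ _
  set low : ℕ × ℕ → ℝ := fun ij => if ij.1 + ij.2 ≤ 4 then g' ij r else 0 with hlowdef
  set tail : ℕ × ℕ → ℝ := fun ij => if ij.1 + ij.2 ≤ 4 then 0 else g' ij r with htaildef
  have hsplit : ∀ ij : ℕ × ℕ, g' ij r = low ij + tail ij := by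
    intro ij
    by_cases h : ij.1 + ij.2 ≤ 4 <;> simp [hlowdef, htaildef, h]
  have hlowvanish : ∀ ij : ℕ × ℕ,
      ij ∉ ({(3,0),(2,1),(1,2),(0,3)} : Finset (ℕ × ℕ)) → low ij = 0 := by
    rintro ⟨i, j⟩ hij
    simp only [hlowdef]
    by_cases h4 : i + j ≤ 4
    · rw [if_pos h4]
      have h3 : i + j < 3 ∨ i + j = 3 ∨ i + j = 4 := by omega
      rcases h3 with h | h | h
      · show (i:ℝ) * c i j * r ^ (i-1) * R ^ j = 0
        rw [hlow i j h]; ring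
      · exfalso
        apply hij
        simp only [Finset.mem_insert, Finset.mem_singleton, Prod.mk.injEq]
        omega
      · show (i:ℝ) * c i j * r ^ (i-1) * R ^ j = 0
        rw [hodd i j (by rw [h]; exact ⟨2, rfl⟩)]; ring
    · rw [if_neg h4]
  have hlowsum : HasSum low (3*c 3 0*r^2 + 2*c 2 1*(r*R) + c 1 2*R^2) := by
    have := hasSum_sum_of_ne_finset_zero (L := SummationFilter.unconditional _) hlowvanish
    convert this using 1
    rw [show ({(3,0),(2,1),(1,2),(0,3)} : Finset (ℕ × ℕ))
        = insert (3,0) (insert (2,1) (insert (1,2) {(0,3)})) from rfl]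
    rw [Finset.sum_insert (by decide), Finset.sum_insert (by decide),
      Finset.sum_insert (by decide), Finset.sum_singleton]
    simp only [hlowdef, hg'def]
    norm_num
    ring
  have htailbound : ∀ ij : ℕ × ℕ,
      |tail ij| ≤ m ^ 4 * ((ij.1 : ℝ) * (C * (2⁻¹:ℝ) ^ (ij.1 + ij.2)) / δ ^ 5) := by
    intro ij
    simp only [htaildef]
    by_cases h : ij.1 + ij.2 ≤ 4
    · rw [if_pos h, abs_zero]; positivity
    · rw [if_neg h]
      exact aux_tail (by omega) hδ hm0 hmδ hrm hRm (hCb ij.1 ij.2)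
  have htailnorm : Summable (fun ij : ℕ × ℕ => ‖tail ij‖) := by
    apply Summable.of_nonneg_of_le (fun ij => norm_nonneg _) _ (hwsum.mul_left (m ^ 4))
    intro ij
    rw [Real.norm_eq_abs]
    exact htailbound ij
  have htailsummable : Summable tail := Summable.of_norm htailnorm
  have htot : (∑' ij : ℕ × ℕ, g' ij r)
      = (3*c 3 0*r^2 + 2*c 2 1*(r*R) + c 1 2*R^2) + ∑' ij : ℕ × ℕ, tail ij := by
    have h1 := hlowsum.add htailsummable.hasSum
    have h2 : (fun ij : ℕ × ℕ => g' ij r) = fun ij => low ij + tail ij := funext hsplit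
    rw [h2]
    exact h1.tsum_eq
  rw [htot, add_sub_cancel_left]
  have hb1 : |∑' ij : ℕ × ℕ, tail ij| ≤ ∑' ij : ℕ × ℕ, m ^ 4 * ((ij.1 : ℝ) * (C * (2⁻¹:ℝ) ^ (ij.1 + ij.2)) / δ ^ 5) := by
    rw [← Real.norm_eq_abs]
    refine (norm_tsum_le_tsum_norm htailnorm).trans ?_
    apply Summable.tsum_le_tsum _ htailnorm (hwsum.mul_left (m ^ 4))
    intro ij
    rw [Real.norm_eq_abs]
    exact htailbound ij
  calc |∑' ij : ℕ × ℕ, tail ij| ≤ _ := hb1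
    _ = m ^ 4 * K := by rw [hKdef, ← tsum_mul_left]
    _ = K * m ^ 4 := by ring



lemma tendsto_helper {F : ℝ → ℝ} {q K δ : ℝ} (hδ : 0 < δ)
    (h : ∀ r : ℝ, r ∈ Ioo 0 δ → |F r - q| ≤ K * r ^ 2) :
    Filter.Tendsto F (nhdsWithin 0 (Ioi 0)) (nhds q) := by
  have h0 : Tendsto (fun r : ℝ => K * r ^ 2) (nhdsWithin 0 (Ioi 0)) (nhds 0) := by
    have hc : Continuous (fun r : ℝ => K * r ^ 2) := by continuity
    have h2 : Tendsto (fun r : ℝ => K * r ^ 2) (nhdsWithin 0 (Ioi 0)) (nhds (K * 0 ^ 2)) :=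
      (hc.tendsto 0).mono_left nhdsWithin_le_nhds
    simpa using h2
  have hev : ∀ᶠ r in nhdsWithin (0:ℝ) (Ioi 0), ‖F r - q‖ ≤ K * r ^ 2 := by
    filter_upwards [Ioo_mem_nhdsGT_of_mem (⟨le_refl 0, hδ⟩ : (0:ℝ) ∈ Ico 0 δ)] with r hr
    rw [Real.norm_eq_abs]
    exact h r hr
  have hsq := squeeze_zero_norm' hev h0
  have := hsq.add (tendsto_const_nhds (x := q))
  simpa using this

lemma tendsto_poly2 (a b e : ℝ) :
    Filter.Tendsto (fun τ : ℝ => a + b * τ + e * τ ^ 2) (nhdsWithin 0 (Ioi 0)) (nhds a) := by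
  have hc : Continuous (fun τ : ℝ => a + b * τ + e * τ ^ 2) := by continuity
  have h2 : Tendsto (fun τ : ℝ => a + b * τ + e * τ ^ 2) (nhdsWithin 0 (Ioi 0))
      (nhds (a + b * 0 + e * 0 ^ 2)) := (hc.tendsto 0).mono_left nhdsWithin_le_nhds
  simpa using h2

lemma tendsto_helper1 {F : ℝ → ℝ} {q K δ : ℝ} (hδ : 0 < δ)
    (h : ∀ r : ℝ, r ∈ Ioo 0 δ → |F r - q| ≤ K * r) :
    Filter.Tendsto F (nhdsWithin 0 (Ioi 0)) (nhds q) := by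
  have h0 : Tendsto (fun r : ℝ => K * r) (nhdsWithin 0 (Ioi 0)) (nhds 0) := by
    have hc : Continuous (fun r : ℝ => K * r) := by continuity
    have h2 : Tendsto (fun r : ℝ => K * r) (nhdsWithin 0 (Ioi 0)) (nhds (K * 0)) :=
      (hc.tendsto 0).mono_left nhdsWithin_le_nhds
    simpa using h2
  have hev : ∀ᶠ r in nhdsWithin (0:ℝ) (Ioi 0), ‖F r - q‖ ≤ K * r := by
    filter_upwards [Ioo_mem_nhdsGT_of_mem (⟨le_refl 0, hδ⟩ : (0:ℝ) ∈ Ico 0 δ)] with r hr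
    rw [Real.norm_eq_abs]
    exact h r hr
  have hsq := squeeze_zero_norm' hev h0
  have := hsq.add (tendsto_const_nhds (x := q))
  simpa using this


set_option maxHeartbeats 1600000 in
/-- For `α > 0` and `Ψ` analytic near `(0,0)` with convergent power
series `Ψ(r,R) = Σ c_{ij} r^i R^j`, odd (coefficients of even total degree vanish),
starting at total degree 3, such that
(iii) `lim_{r→0⁺} ∂_rΨ(r,r)/r²` exists in `(0,∞)`,
(iv) `∂_RΨ(r,r) = −(α/(α+1)) ∂_rΨ(r,r)` for small `r > 0`,
(v) for every `τ ∈ (0,1]`, `∂_RΨ(r,r)τ²/∂_RΨ(r,rτ) > 0` for small `r > 0` and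
`lim_{r→0⁺} [∂_rΨ(r,rτ)/∂_rΨ(r,r)]·[∂_RΨ(r,r)τ²/∂_RΨ(r,rτ)]^{α/(α+1)} = 1`,
then `c₂₁ = c₁₂ = 0`, `c₃₀ > 0` and `c₀₃ = −(α/(α+1)) c₃₀`. -/
theorem stmt1 (α : ℝ) (hα : 0 < α)
    (Ψ : ℝ → ℝ → ℝ) (c : ℕ → ℕ → ℝ)
    (hconv : ∃ ε > (0 : ℝ), ∀ r R : ℝ, |r| < ε → |R| < ε →
      HasSum (fun ij : ℕ × ℕ => c ij.1 ij.2 * r ^ ij.1 * R ^ ij.2) (Ψ r R))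
    (hodd : ∀ i j : ℕ, Even (i + j) → c i j = 0)
    (hlow : ∀ i j : ℕ, i + j < 3 → c i j = 0)
    (hdens : ∃ L : ℝ, 0 < L ∧
      Filter.Tendsto (fun r : ℝ => deriv (fun s => Ψ s r) r / r ^ 2)
        (nhdsWithin 0 (Ioi 0)) (nhds L))
    (hconstr : ∀ᶠ r in nhdsWithin (0 : ℝ) (Ioi 0),
      deriv (fun R => Ψ r R) r = -(α / (α + 1)) * deriv (fun s => Ψ s r) r)
    (hY : ∀ τ ∈ Ioc (0 : ℝ) 1,
      (∀ᶠ r in nhdsWithin (0 : ℝ) (Ioi 0),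
        0 < deriv (fun R => Ψ r R) r * τ ^ 2 / deriv (fun R => Ψ r R) (τ * r)) ∧
      Filter.Tendsto (fun r : ℝ =>
          (deriv (fun s => Ψ s (τ * r)) r / deriv (fun s => Ψ s r) r) *
            (deriv (fun R => Ψ r R) r * τ ^ 2 / deriv (fun R => Ψ r R) (τ * r))
              ^ (α / (α + 1)))
        (nhdsWithin 0 (Ioi 0)) (nhds 1)) :
    c 2 1 = 0 ∧ c 1 2 = 0 ∧ 0 < c 3 0 ∧ c 0 3 = -(α / (α + 1)) * c 3 0 := by
  obtain ⟨ε, hε, hS⟩ := hconv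
  have hα1 : (0:ℝ) < α + 1 := by linarith
  set β : ℝ := α / (α + 1) with hβdef
  have hβpos : 0 < β := div_pos hα hα1
  have hβne : β ≠ 0 := ne_of_gt hβpos
  obtain ⟨δ₁, hδ₁, K₁, H1⟩ := key c Ψ ε hε hS hodd hlow
  have hS' : ∀ r R : ℝ, |r| < ε → |R| < ε →
      HasSum (fun ij : ℕ × ℕ => c ij.2 ij.1 * r ^ ij.1 * R ^ ij.2) (Ψ R r) := by
    intro r R hr hR
    have h0 := hS R r hR hr
    have h1 : HasSum ((fun ij : ℕ × ℕ => c ij.1 ij.2 * R ^ ij.1 * r ^ ij.2) ∘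
        (Equiv.prodComm ℕ ℕ)) (Ψ R r) := ((Equiv.prodComm ℕ ℕ).hasSum_iff).mpr h0
    have h2 : (fun ij : ℕ × ℕ => c ij.2 ij.1 * r ^ ij.1 * R ^ ij.2)
        = ((fun ij : ℕ × ℕ => c ij.1 ij.2 * R ^ ij.1 * r ^ ij.2) ∘
          (Equiv.prodComm ℕ ℕ)) := by
      funext ij
      simp only [Function.comp_apply, Equiv.prodComm_apply, Prod.fst_swap, Prod.snd_swap]
      ring
    rw [h2]
    exact h1
  obtain ⟨δ₂, hδ₂, K₂, H2⟩ := key (fun i j => c j i) (fun r R => Ψ R r) ε hε hS'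
    (fun i j h => hodd j i (by rwa [Nat.add_comm] at h))
    (fun i j h => hlow j i (by omega))
  have H2' : ∀ r R : ℝ, |r| < δ₂ → |R| < δ₂ →
      |deriv (fun s => Ψ R s) r - (3*c 0 3*r^2 + 2*c 1 2*(r*R) + c 2 1*R^2)|
        ≤ K₂ * (max |r| |R|)^4 := H2
  -- limits of the two derivative quotients
  have lim1 : ∀ τ : ℝ, 0 < τ → τ ≤ 1 →
      Tendsto (fun r : ℝ => deriv (fun s => Ψ s (τ*r)) r / r^2) (nhdsWithin 0 (Ioi 0))
        (nhds (3*c 3 0 + 2*c 2 1*τ + c 1 2*τ^2)) := by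
    intro τ hτ0 hτ1
    apply tendsto_helper hδ₁
    rintro r ⟨hr0, hrδ⟩
    have habs_r : |r| = r := abs_of_pos hr0
    have hτr_le : τ*r ≤ r := by nlinarith
    have habs_τr : |τ*r| = τ*r := abs_of_pos (mul_pos hτ0 hr0)
    have h2 := H1 r (τ*r) (by rwa [habs_r]) (by rw [habs_τr]; linarith)
    have hmax : max |r| |τ*r| = r := by
      rw [habs_r, habs_τr]; exact max_eq_left hτr_le
    rw [hmax] at h2
    have hr2 : (0:ℝ) < r^2 := by positivity
    have heq : deriv (fun s => Ψ s (τ*r)) r / r^2 - (3*c 3 0 + 2*c 2 1*τ + c 1 2*τ^2)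
        = (deriv (fun s => Ψ s (τ*r)) r
            - (3*c 3 0*r^2 + 2*c 2 1*(r*(τ*r)) + c 1 2*(τ*r)^2)) / r^2 := by
      field_simp
    rw [heq, abs_div, abs_of_pos hr2, div_le_iff₀ hr2]
    exact h2.trans_eq (by ring)
  have lim2 : ∀ τ : ℝ, 0 < τ → τ ≤ 1 →
      Tendsto (fun r : ℝ => deriv (fun R' => Ψ r R') (τ*r) / r^2) (nhdsWithin 0 (Ioi 0))
        (nhds (c 2 1 + 2*c 1 2*τ + 3*c 0 3*τ^2)) := by
    intro τ hτ0 hτ1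
    apply tendsto_helper hδ₂
    rintro r ⟨hr0, hrδ⟩
    have habs_r : |r| = r := abs_of_pos hr0
    have hτr_le : τ*r ≤ r := by nlinarith
    have habs_τr : |τ*r| = τ*r := abs_of_pos (mul_pos hτ0 hr0)
    have h2 := H2' (τ*r) r (by rw [habs_τr]; linarith) (by rwa [habs_r])
    have hmax : max |τ*r| |r| = r := by
      rw [habs_r, habs_τr]; exact max_eq_right hτr_le
    rw [hmax] at h2
    have hr2 : (0:ℝ) < r^2 := by positivity
    have heq : deriv (fun R' => Ψ r R') (τ*r) / r^2 - (c 2 1 + 2*c 1 2*τ + 3*c 0 3*τ^2)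
        = (deriv (fun R' => Ψ r R') (τ*r)
            - (3*c 0 3*(τ*r)^2 + 2*c 1 2*((τ*r)*r) + c 2 1*r^2)) / r^2 := by
      field_simp
      ring
    rw [heq, abs_div, abs_of_pos hr2, div_le_iff₀ hr2]
    exact h2.trans_eq (by ring)
  have lim1' : Tendsto (fun r : ℝ => deriv (fun s => Ψ s r) r / r^2) (nhdsWithin 0 (Ioi 0))
      (nhds (3*c 3 0 + 2*c 2 1 + c 1 2)) := by
    have h1 := lim1 1 one_pos le_rfl
    have h2 := h1.congr (fun r => by rw [one_mul])
    have h3 : (3*c 3 0 + 2*c 2 1*1 + c 1 2*1^2) = 3*c 3 0 + 2*c 2 1 + c 1 2 := by ring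
    rwa [h3] at h2
  have lim2' : Tendsto (fun r : ℝ => deriv (fun R' => Ψ r R') r / r^2) (nhdsWithin 0 (Ioi 0))
      (nhds (c 2 1 + 2*c 1 2 + 3*c 0 3)) := by
    have h1 := lim2 1 one_pos le_rfl
    have h2 := h1.congr (fun r => by rw [one_mul])
    have h3 : (c 2 1 + 2*c 1 2*1 + 3*c 0 3*1^2) = c 2 1 + 2*c 1 2 + 3*c 0 3 := by ring
    rwa [h3] at h2
  obtain ⟨L, hL, hLt⟩ := hdens
  have hLne : L ≠ 0 := ne_of_gt hL
  have hAL : 3*c 3 0 + 2*c 2 1 + c 1 2 = L := tendsto_nhds_unique lim1' hLt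
  have hq21 : c 2 1 + 2*c 1 2 + 3*c 0 3 = -β * L := by
    have h1 := hLt.const_mul (-β)
    have hrhs : Tendsto (fun r : ℝ => deriv (fun R' => Ψ r R') r / r^2)
        (nhdsWithin 0 (Ioi 0)) (nhds (-β * L)) := by
      apply Tendsto.congr' _ h1
      filter_upwards [hconstr] with r hr
      rw [hr]
      ring
    exact tendsto_nhds_unique lim2' hrhs
  set G : ℝ := (|3*c 3 0| + 2*|c 2 1| + |c 1 2|) / L with hGdef
  have hG0 : 0 ≤ G := by positivity
  set K' : ℝ := β * L * G ^ (1/β) with hK'def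
  have hK'0 : 0 ≤ K' := by
    apply mul_nonneg (by positivity)
    exact Real.rpow_nonneg hG0 _
  have hbound : ∀ τ : ℝ, 0 < τ → τ ≤ 1 →
      |c 2 1 + 2*c 1 2*τ + 3*c 0 3*τ^2| ≤ K' * τ^2 := by
    intro τ hτ0 hτ1
    by_cases hq2τ : c 2 1 + 2*c 1 2*τ + 3*c 0 3*τ^2 = 0
    · rw [hq2τ, abs_zero]; positivity
    · obtain ⟨hpos, hlim⟩ := hY τ ⟨hτ0, hτ1⟩
      have l1 := lim1 τ hτ0 hτ1
      have l2 := lim2 τ hτ0 hτ1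
      set q1τ : ℝ := 3*c 3 0 + 2*c 2 1*τ + c 1 2*τ^2 with hq1τdef
      set q2τ : ℝ := c 2 1 + 2*c 1 2*τ + 3*c 0 3*τ^2 with hq2τdef
      have hXev : (fun r : ℝ => ((deriv (fun R' => Ψ r R') r / r^2) * τ^2)
            / (deriv (fun R' => Ψ r R') (τ*r) / r^2))
          =ᶠ[nhdsWithin (0:ℝ) (Ioi 0)]
          (fun r => deriv (fun R' => Ψ r R') r * τ^2 / deriv (fun R' => Ψ r R') (τ*r)) := by
        filter_upwards [self_mem_nhdsWithin] with r hr
        have hrne : r ≠ 0 := ne_of_gt hr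
        by_cases hb : deriv (fun R' => Ψ r R') (τ*r) = 0
        · rw [hb]; simp
        · field_simp
      have hXlim : Tendsto
          (fun r : ℝ => deriv (fun R' => Ψ r R') r * τ^2 / deriv (fun R' => Ψ r R') (τ*r))
          (nhdsWithin 0 (Ioi 0)) (nhds ((-β*L) * τ^2 / q2τ)) := by
        have hnum : Tendsto (fun r : ℝ => (deriv (fun R' => Ψ r R') r / r^2) * τ^2)
            (nhdsWithin 0 (Ioi 0)) (nhds ((-β*L) * τ^2)) := by
          have h4 := lim2'.mul_const (τ^2)
          rwa [hq21] at h4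
        exact Tendsto.congr' hXev (hnum.div l2 hq2τ)
      set b : ℝ := (-β*L) * τ^2 / q2τ with hbdef
      have hb0 : 0 ≤ b := ge_of_tendsto hXlim (hpos.mono fun r hr => hr.le)
      have hfac1lim : Tendsto
          (fun r : ℝ => deriv (fun s => Ψ s (τ*r)) r / deriv (fun s => Ψ s r) r)
          (nhdsWithin 0 (Ioi 0)) (nhds (q1τ / L)) := by
        have hev : (fun r : ℝ => (deriv (fun s => Ψ s (τ*r)) r / r^2)
              / (deriv (fun s => Ψ s r) r / r^2))
            =ᶠ[nhdsWithin (0:ℝ) (Ioi 0)]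
            (fun r => deriv (fun s => Ψ s (τ*r)) r / deriv (fun s => Ψ s r) r) := by
          filter_upwards [self_mem_nhdsWithin] with r hr
          have hrne : r ≠ 0 := ne_of_gt hr
          by_cases hb2 : deriv (fun s => Ψ s r) r = 0
          · rw [hb2]; simp
          · field_simp
        have hden : Tendsto (fun r : ℝ => deriv (fun s => Ψ s r) r / r^2)
            (nhdsWithin 0 (Ioi 0)) (nhds L) := by
          have := lim1'
          rwa [hAL] at this
        exact Tendsto.congr' hev (l1.div hden hLne)
      have hfull := hfac1lim.mul (hXlim.rpow_const (Or.inr hβpos.le))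
      have hone : (q1τ / L) * b ^ β = 1 := tendsto_nhds_unique hfull hlim
      have hbne : b ≠ 0 := by
        intro h0
        rw [h0, Real.zero_rpow hβne, mul_zero] at hone
        exact one_ne_zero hone.symm
      have hbpos : 0 < b := lt_of_le_of_ne hb0 (Ne.symm hbne)
      have hbβpos : (0:ℝ) < b ^ β := Real.rpow_pos_of_pos hbpos β
      have hgeq : q1τ / L = (b ^ β)⁻¹ := by
        have h5 : (q1τ / L) * b ^ β * (b ^ β)⁻¹ = 1 * (b ^ β)⁻¹ := by rw [hone]
        rwa [mul_assoc, mul_inv_cancel₀ (ne_of_gt hbβpos), mul_one, one_mul] at h5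
      have hgeq' : q1τ / L = b ^ (-β) := by
        rw [hgeq, Real.rpow_neg hbpos.le]
      have hgpos : 0 < q1τ / L := by rw [hgeq]; positivity
      have hbinv : b⁻¹ = (q1τ / L) ^ (1/β) := by
        rw [hgeq', ← Real.rpow_mul hbpos.le]
        have h6 : (-β) * (1/β) = -1 := by field_simp
        rw [h6, Real.rpow_neg_one]
      have hq2τ_eq : q2τ = (-β*L) * τ^2 / b := by
        have h7 : b * q2τ = (-β*L) * τ^2 := by
          rw [hbdef]
          field_simp
        rw [eq_div_iff hbne, mul_comm]
        exact h7
      have hgG : q1τ / L ≤ G := by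
        rw [hGdef]
        apply (div_le_div_iff_of_pos_right hL).mpr
        rw [hq1τdef]
        have hh1 : 3*c 3 0 ≤ |3*c 3 0| := le_abs_self _
        have hh2 : c 2 1 * τ ≤ |c 2 1| * τ := mul_le_mul_of_nonneg_right (le_abs_self _) hτ0.le
        have hh3 : c 1 2 * τ^2 ≤ |c 1 2| * τ^2 :=
          mul_le_mul_of_nonneg_right (le_abs_self _) (sq_nonneg τ)
        have hτsq : τ^2 ≤ 1 := by nlinarith
        have hh4 : |c 2 1| * τ ≤ |c 2 1| := by
          simpa using mul_le_mul_of_nonneg_left hτ1 (abs_nonneg (c 2 1))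
        have hh5 : |c 1 2| * τ^2 ≤ |c 1 2| := by
          simpa using mul_le_mul_of_nonneg_left hτsq (abs_nonneg (c 1 2))
        linarith
      have hGpow : (q1τ / L) ^ (1/β) ≤ G ^ (1/β) :=
        Real.rpow_le_rpow hgpos.le hgG (by positivity)
      have habsq2 : |q2τ| = β * L * τ^2 * b⁻¹ := by
        rw [hq2τ_eq, abs_div, abs_of_pos hbpos]
        have h8 : |(-β*L) * τ^2| = β*L*τ^2 := by
          rw [abs_of_nonpos (by
            have := mul_nonneg (mul_nonneg hβpos.le hL.le) (sq_nonneg τ)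
            nlinarith)]
          ring
        rw [h8, div_eq_mul_inv]
      rw [habsq2, hbinv]
      calc β*L*τ^2*((q1τ/L) ^ (1/β)) ≤ β*L*τ^2*(G ^ (1/β)) := by
            apply mul_le_mul_of_nonneg_left hGpow (by positivity)
        _ = K'*τ^2 := by rw [hK'def]; ring
  have hc21 : c 2 1 = 0 := by
    have t1 := tendsto_poly2 (c 2 1) (2*c 1 2) (3*c 0 3)
    have t2 : Tendsto (fun τ : ℝ => c 2 1 + 2*c 1 2*τ + 3*c 0 3*τ^2)
        (nhdsWithin 0 (Ioi 0)) (nhds 0) := by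
      apply tendsto_helper one_pos
      rintro τ ⟨hτ0, hτ1⟩
      rw [sub_zero]
      exact hbound τ hτ0 hτ1.le
    exact tendsto_nhds_unique t1 t2
  have hc12 : c 1 2 = 0 := by
    have t1 := tendsto_poly2 (2*c 1 2) (3*c 0 3) 0
    have t2 : Tendsto (fun τ : ℝ => 2*c 1 2 + 3*c 0 3*τ + 0*τ^2)
        (nhdsWithin 0 (Ioi 0)) (nhds 0) := by
      apply tendsto_helper1 one_pos
      rintro τ ⟨hτ0, hτ1⟩
      rw [sub_zero]
      have h := hbound τ hτ0 hτ1.le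
      rw [hc21] at h
      have h9 : |2*c 1 2 + 3*c 0 3*τ + 0*τ^2| * τ ≤ K' * τ * τ := by
        calc |2*c 1 2 + 3*c 0 3*τ + 0*τ^2| * τ
            = |(2*c 1 2 + 3*c 0 3*τ + 0*τ^2) * τ| := by
              rw [abs_mul, abs_of_pos hτ0]
          _ = |0 + 2*c 1 2*τ + 3*c 0 3*τ^2| := by ring_nf
          _ ≤ K' * τ^2 := h
          _ = K' * τ * τ := by ring
      exact le_of_mul_le_mul_right h9 hτ0
    have h10 : 2*c 1 2 = 0 := tendsto_nhds_unique t1 t2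
    linarith
  refine ⟨hc21, hc12, ?_, ?_⟩
  · rw [hc21, hc12] at hAL
    linarith
  · rw [hc21, hc12] at hq21 hAL
    have hL3 : L = 3*c 3 0 := by linarith
    rw [hL3] at hq21
    have h11 : c 0 3 = -β * c 3 0 := by nlinarith [hq21]
    exact h11
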